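/- Let c ∈ [0, 1) and k ∈ ℤ. Then ∫_0^{2π} e^{i k α} · log |1 − c e^{iα}| dα = − π c^{|k|} / |k| if k ≠ 0, and ∫_0^{2π} log |1 − c e^{iα}| dα = 0. -/

import Mathlib

open Real intervalIntegral Complex

lemma intE (m : ℤ) : ∫ α in (0:ℝ)..(2*π), Complex.exp ((m:ℂ) * α * Complex.I)
    = if m = 0 then ((2*π:ℝ):ℂ) else 0 := by
  split_ifs with h
  · simp [h]
  · have hm : (m:ℂ) * Complex.I ≠ 0 :=
      mul_ne_zero (by exact_mod_cast h) Complex.I_ne_zero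
    have key : ∀ α : ℝ, (m:ℂ) * α * Complex.I = ((m:ℂ) * Complex.I) * α := fun α => by ring
    simp_rw [key]
    rw [integral_exp_mul_complex hm]
    have h1 : Complex.exp ((m:ℂ) * Complex.I * ((2*π:ℝ):ℂ)) = 1 := by
      rw [show (m:ℂ) * Complex.I * ((2*π:ℝ):ℂ) = (m:ℤ) * (2*(π:ℂ)*Complex.I) by push_cast; ring]
      exact Complex.exp_int_mul_two_pi_mul_I m
    rw [show ((m:ℂ) * Complex.I) * ((0:ℝ):ℂ) = 0 by simp, Complex.exp_zero, h1, sub_self,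
      zero_div]

lemma term_eq (c : ℝ) (k : ℤ) (n : ℕ) (α : ℝ) :
    Complex.exp ((k:ℂ)*(α:ℂ)*Complex.I) *
      ((-(((c:ℂ)*Complex.exp ((α:ℂ)*Complex.I))^n / (n:ℂ))).re : ℂ)
    = -((c:ℂ)^n/(n:ℂ)) *
        (Complex.exp (((k+(n:ℤ) : ℤ):ℂ)*(α:ℂ)*Complex.I)
          + Complex.exp (((k-(n:ℤ) : ℤ):ℂ)*(α:ℂ)*Complex.I)) / 2 := by
  have h1 : ((c:ℂ)*Complex.exp ((α:ℂ)*Complex.I))^n / (n:ℂ)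
      = ((c^n/(n:ℝ) : ℝ) : ℂ) * Complex.exp (((n*α : ℝ):ℂ)*Complex.I) := by
    rw [mul_pow, ← Complex.exp_nat_mul]; push_cast; ring
  have h2 : ((((c:ℂ)*Complex.exp ((α:ℂ)*Complex.I))^n / (n:ℂ))).re
      = c^n/(n:ℝ) * Real.cos (n*α) := by
    rw [h1, Complex.re_ofReal_mul, Complex.exp_ofReal_mul_I_re]
  rw [Complex.neg_re, h2]
  push_cast [Complex.ofReal_cos]
  have h3 : 2 * Complex.cos ((n:ℂ)*(α:ℂ)) =
      Complex.exp (((n:ℂ)*α)*Complex.I) + Complex.exp (-((n:ℂ)*α)*Complex.I) :=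
    Complex.two_cos _
  have h4 : Complex.exp ((k:ℂ)*(α:ℂ)*Complex.I) * Complex.exp (((n:ℂ)*α)*Complex.I)
      = Complex.exp (((k:ℂ)+(n:ℂ))*(α:ℂ)*Complex.I) := by
    rw [← Complex.exp_add]; ring_nf
  have h5 : Complex.exp ((k:ℂ)*(α:ℂ)*Complex.I) * Complex.exp (-((n:ℂ)*α)*Complex.I)
      = Complex.exp (((k:ℂ)-(n:ℂ))*(α:ℂ)*Complex.I) := by
    rw [← Complex.exp_add]; ring_nf
  rw [← h4, ← h5]
  by_cases hn : n = 0
  · subst hn; simp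
  · have hn' : (n:ℂ) ≠ 0 := Nat.cast_ne_zero.mpr hn
    simp only [neg_mul] at h3 h5 ⊢
    field_simp
    have h3' : 2 * Complex.cos ((α:ℂ)*n) =
        Complex.exp ((α:ℂ)*Complex.I*n) + Complex.exp (-((α:ℂ)*Complex.I*n)) := by
      rw [mul_comm (α:ℂ) (n:ℂ), show (α:ℂ)*Complex.I*n = n*α*Complex.I by ring]; exact h3
    linear_combination -((c:ℂ)^n) * h3'

noncomputable def F (c : ℝ) (k : ℤ) (n : ℕ) (α : ℝ) : ℂ :=
  -((c:ℂ)^n/(n:ℂ)) *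
    (Complex.exp (((k+(n:ℤ) : ℤ):ℂ)*(α:ℂ)*Complex.I)
      + Complex.exp (((k-(n:ℤ) : ℤ):ℂ)*(α:ℂ)*Complex.I)) / 2

lemma hasSumF (c : ℝ) (hc0 : 0 ≤ c) (hc1 : c < 1) (k : ℤ) (α : ℝ) :
    HasSum (fun n : ℕ => F c k n α)
      (Complex.exp ((k:ℂ)*(α:ℂ)*Complex.I) *
        (Real.log ‖1 - (c:ℂ) * Complex.exp ((α:ℂ)*Complex.I)‖ : ℂ)) := by
  have hz : ‖(c:ℂ) * Complex.exp ((α:ℂ)*Complex.I)‖ < 1 := by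
    rw [norm_mul, Complex.norm_exp_ofReal_mul_I,
      Complex.norm_real, Real.norm_eq_abs, mul_one, _root_.abs_of_nonneg hc0]
    exact hc1
  have h1 := Complex.hasSum_taylorSeries_neg_log hz
  have h2 := h1.neg
  rw [neg_neg] at h2
  have h3 := Complex.reCLM.hasSum h2
  have h4 := Complex.ofRealCLM.hasSum h3
  have h5 := h4.mul_left (Complex.exp ((k:ℂ)*(α:ℂ)*Complex.I))
  simp only [Complex.reCLM_apply, Complex.ofRealCLM_apply] at h5
  have hv : (Complex.log (1 - (c:ℂ) * Complex.exp ((α:ℂ)*Complex.I))).re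
      = Real.log ‖1 - (c:ℂ) * Complex.exp ((α:ℂ)*Complex.I)‖ := Complex.log_re _
  rw [hv] at h5
  have heq : (fun n : ℕ => F c k n α) = fun n : ℕ =>
      Complex.exp ((k:ℂ)*(α:ℂ)*Complex.I) *
        (((-(((c:ℂ) * Complex.exp ((α:ℂ)*Complex.I))^n / (n:ℂ))).re : ℝ) : ℂ) :=
    funext fun n => (term_eq c k n α).symm
  rw [heq]
  exact h5

lemma contF (c : ℝ) (k : ℤ) (n : ℕ) : Continuous (F c k n) := by
  unfold F
  fun_prop

lemma normF_le (c : ℝ) (hc0 : 0 ≤ c) (k : ℤ) (n : ℕ) (α : ℝ) : ‖F c k n α‖ ≤ c ^ n := by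
  have he : ∀ m : ℤ, ‖Complex.exp ((m:ℂ)*(α:ℂ)*Complex.I)‖ = 1 := by
    intro m
    rw [show (m:ℂ)*(α:ℂ)*Complex.I = (((m*α : ℝ)):ℂ)*Complex.I by push_cast; ring,
      Complex.norm_exp_ofReal_mul_I]
  have h2 : ‖Complex.exp (((k+(n:ℤ) : ℤ):ℂ)*(α:ℂ)*Complex.I)
      + Complex.exp (((k-(n:ℤ) : ℤ):ℂ)*(α:ℂ)*Complex.I)‖ ≤ 2 := by
    refine (norm_add_le _ _).trans ?_
    rw [he, he]; norm_num
  have h1 : ‖F c k n α‖ ≤ ‖(c:ℂ)^n/(n:ℂ)‖ * 2 / 2 := by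
    unfold F
    rw [norm_div, norm_mul, norm_neg]
    have hn2 : ‖(2:ℂ)‖ = (2:ℝ) := by norm_num
    rw [hn2]
    exact div_le_div_of_nonneg_right
      (mul_le_mul_of_nonneg_left h2 (norm_nonneg _)) (by norm_num)
  refine h1.trans ?_
  rw [mul_div_assoc]
  norm_num [_root_.abs_of_nonneg hc0, norm_div]
  rcases Nat.eq_zero_or_pos n with hn | hn
  · subst hn; simp
  · have hc : ‖(c:ℂ)^n‖ = c^n := by
      rw [norm_pow, Complex.norm_real, Real.norm_eq_abs, _root_.abs_of_nonneg hc0]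
    have hnn : ‖((n:ℕ):ℂ)‖ = (n:ℝ) := Complex.norm_natCast n
    exact div_le_self (pow_nonneg hc0 n) (by exact_mod_cast hn)

lemma intFval (c : ℝ) (k : ℤ) (n : ℕ) :
    ∫ α in (0:ℝ)..(2*π), F c k n α
      = -((c:ℂ)^n/(n:ℂ))/2 *
          ((if k+(n:ℤ) = 0 then ((2*π:ℝ):ℂ) else 0) + (if k-(n:ℤ) = 0 then ((2*π:ℝ):ℂ) else 0)) := by
  have h : ∀ α : ℝ, F c k n α = -((c:ℂ)^n/(n:ℂ))/2 *
      (Complex.exp (((k+(n:ℤ) : ℤ):ℂ)*(α:ℂ)*Complex.I)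
        + Complex.exp (((k-(n:ℤ) : ℤ):ℂ)*(α:ℂ)*Complex.I)) := fun α => by unfold F; ring
  simp_rw [h]
  rw [intervalIntegral.integral_const_mul, intervalIntegral.integral_add, intE, intE]
  · exact (Continuous.intervalIntegrable (by fun_prop) _ _)
  · exact (Continuous.intervalIntegrable (by fun_prop) _ _)

lemma key (c : ℝ) (hc0 : 0 ≤ c) (hc1 : c < 1) (k : ℤ) :
    ∫ α in (0:ℝ)..(2*π),
        Complex.exp ((k : ℂ) * (α : ℂ) * Complex.I) *
          (Real.log ‖1 - (c : ℂ) * Complex.exp ((α : ℂ) * Complex.I)‖ : ℂ)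
      = if k = 0 then 0 else -(π : ℂ) * (c : ℂ) ^ k.natAbs / (k.natAbs : ℂ) := by
  have h2π : (0:ℝ) ≤ 2*π := by positivity
  have hInt : ∀ n : ℕ, MeasureTheory.Integrable (F c k n)
      (MeasureTheory.volume.restrict (Set.Ioc (0:ℝ) (2*π))) :=
    fun n => ((contF c k n).integrableOn_Ioc)
  have hSum : Summable fun n : ℕ =>
      ∫ α in Set.Ioc (0:ℝ) (2*π), ‖F c k n α‖ := by
    refine Summable.of_nonneg_of_le
      (fun n => MeasureTheory.integral_nonneg fun α => norm_nonneg _)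
      (fun n => ?_) ((summable_geometric_of_lt_one hc0 hc1).mul_left (2*π))
    have hb : ∫ α in Set.Ioc (0:ℝ) (2*π), ‖F c k n α‖
        ≤ ∫ _ in Set.Ioc (0:ℝ) (2*π), c^n :=
      MeasureTheory.integral_mono ((hInt n).norm)
        (MeasureTheory.integrable_const _) (fun α => normF_le c hc0 k n α)
    refine hb.trans ?_
    rw [MeasureTheory.setIntegral_const, smul_eq_mul, Real.volume_real_Ioc_of_le h2π]
    rw [sub_zero]
  have step1 : ∫ α in (0:ℝ)..(2*π),
      Complex.exp ((k : ℂ) * (α : ℂ) * Complex.I) *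
        (Real.log ‖1 - (c : ℂ) * Complex.exp ((α : ℂ) * Complex.I)‖ : ℂ)
      = ∑' n : ℕ, ∫ α in (0:ℝ)..(2*π), F c k n α := by
    simp_rw [intervalIntegral.integral_of_le h2π]
    rw [MeasureTheory.integral_tsum_of_summable_integral_norm hInt hSum]
    refine MeasureTheory.integral_congr_ae (Filter.Eventually.of_forall fun α => ?_)
    exact ((hasSumF c hc0 hc1 k α).tsum_eq).symm
  rw [step1]
  simp_rw [intFval c k]
  split_ifs with hk
  · subst hk
    convert tsum_zero with n
    rcases Nat.eq_zero_or_pos n with h | h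
    · subst h; simp
    · have h1 : ¬((0:ℤ) + (n:ℤ) = 0) := by omega
      have h2 : ¬((0:ℤ) - (n:ℤ) = 0) := by omega
      simp only [h1, h2, if_false, add_zero, mul_zero]
  · rw [tsum_eq_single k.natAbs ?_]
    · rcases lt_or_gt_of_ne hk with h | h
      · have h1 : k + (k.natAbs:ℤ) = 0 := by omega
        have h2 : ¬(k - (k.natAbs:ℤ) = 0) := by omega
        simp only [h1, h2, if_true, if_false, add_zero]
        push_cast
        ring
      · have h1 : ¬(k + (k.natAbs:ℤ) = 0) := by omega
        have h2 : k - (k.natAbs:ℤ) = 0 := by omega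
        simp only [h1, h2, if_true, if_false, zero_add]
        push_cast
        ring
    · intro n hn
      have h1 : ¬(k + (n:ℤ) = 0) := by omega
      have h2 : ¬(k - (n:ℤ) = 0) := by omega
      simp only [h1, h2, if_false, add_zero, mul_zero]


/-- For `c ∈ [0,1)` and `k ∈ ℤ`:
`∫_0^{2π} e^{ikα} log|1 − c e^{iα}| dα = −π c^{|k|}/|k|` if `k ≠ 0`, and the
integral of `log|1 − c e^{iα}|` over `[0, 2π]` vanishes. -/
theorem integral_exp_mul_log_abs_one_sub_c_exp
    (c : ℝ) (hc0 : 0 ≤ c) (hc1 : c < 1) (k : ℤ) :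
    (k ≠ 0 →
      ∫ α in (0:ℝ)..(2 * π),
          Complex.exp ((k : ℂ) * (α : ℂ) * Complex.I) *
            (Real.log ‖1 - (c : ℂ) * Complex.exp ((α : ℂ) * Complex.I)‖ : ℂ)
        = -(π : ℂ) * (c : ℂ) ^ k.natAbs / (k.natAbs : ℂ)) ∧
    (∫ α in (0:ℝ)..(2 * π),
        Real.log ‖1 - (c : ℂ) * Complex.exp ((α : ℂ) * Complex.I)‖ = 0) := by
  constructor
  · intro hk
    have h := key c hc0 hc1 k
    rwa [if_neg hk] at h
  · have h := key c hc0 hc1 0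
    rw [if_pos rfl] at h
    simp only [Int.cast_zero, zero_mul, Complex.exp_zero, one_mul] at h
    rw [intervalIntegral.integral_ofReal] at h
    exact_mod_cast h
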